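/- Componentwise logarithmic inequality: for a, b > 0, (a − b) log(a/b) ≥ 2 (a − b)² / (a + b). -/

import Mathlib

lemma log_ge_aux (x : ℝ) (hx : 1 ≤ x) : 2 ≤ Real.log x + 4 * (x + 1)⁻¹ := by
  have hmono : MonotoneOn (fun y : ℝ => Real.log y + 4 * (y + 1)⁻¹) (Set.Ici 1) := by
    have hder : ∀ y : ℝ, 1 ≤ y → HasDerivAt (fun y : ℝ => Real.log y + 4 * (y + 1)⁻¹)
        (y⁻¹ + 4 * (-1 / (y + 1) ^ 2)) y := by
      intro y hy
      have h1 : HasDerivAt (fun y : ℝ => y + 1) 1 y := (hasDerivAt_id y).add_const 1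
      have h2 : HasDerivAt (fun y : ℝ => (y + 1)⁻¹) (-1 / (y + 1) ^ 2) y :=
        h1.inv (by positivity)
      exact (Real.hasDerivAt_log (by positivity)).add (h2.const_mul 4)
    apply monotoneOn_of_deriv_nonneg (convex_Ici 1)
    · apply ContinuousOn.add
      · apply Real.continuousOn_log.mono
        intro y hy
        simp only [Set.mem_Ici] at hy
        simp only [Set.mem_compl_iff, Set.mem_singleton_iff]
        intro h; rw [h] at hy; linarith
      · exact (continuousOn_const.mul ((continuousOn_id.add continuousOn_const).inv₀
          (fun y hy => by simp only [Set.mem_Ici] at hy; show y + 1 ≠ 0; intro h; linarith)))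
    · intro y hy
      rw [interior_Ici] at hy
      exact (hder y (le_of_lt hy)).differentiableAt.differentiableWithinAt
    · intro y hy
      rw [interior_Ici, Set.mem_Ioi] at hy
      rw [(hder y (le_of_lt hy)).deriv]
      have hy0 : 0 < y := by linarith
      rw [div_eq_mul_inv]
      have h1 : (0:ℝ) < (y + 1) ^ 2 := by positivity
      have key : 4 * y ≤ (y + 1) ^ 2 := by nlinarith [sq_nonneg (y - 1)]
      rw [← sub_nonneg]
      have : y⁻¹ + 4 * (-1 * ((y + 1) ^ 2)⁻¹) - 0 = ((y+1)^2 - 4*y) / (y * (y+1)^2) := by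
        field_simp; ring
      rw [this]
      apply div_nonneg (by nlinarith) (by positivity)
  have h1 : (fun y : ℝ => Real.log y + 4 * (y + 1)⁻¹) 1 ≤
      (fun y : ℝ => Real.log y + 4 * (y + 1)⁻¹) x :=
    hmono (Set.mem_Ici.mpr le_rfl) (Set.mem_Ici.mpr hx) hx
  simp only [Real.log_one] at h1
  norm_num at h1
  linarith

lemma log_ge (x : ℝ) (hx : 1 ≤ x) : 2 * (x - 1) / (x + 1) ≤ Real.log x := by
  have h := log_ge_aux x hx
  have hx1 : (0:ℝ) < x + 1 := by linarith
  rw [div_le_iff₀ hx1]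
  have : 4 * (x + 1)⁻¹ = 4 / (x + 1) := by rw [div_eq_mul_inv]
  rw [this] at h
  have h2 : 2 - 4 / (x + 1) ≤ Real.log x := by linarith
  have h3 : (2 - 4 / (x + 1)) * (x + 1) = 2 * (x - 1) := by field_simp; ring
  nlinarith [mul_le_mul_of_nonneg_right h2 (le_of_lt hx1)]

lemma log_ineq_half (a b : ℝ) (ha : 0 < a) (hb : 0 < b) (hab : b ≤ a) :
    (a - b) * Real.log (a / b) ≥ 2 * (a - b) ^ 2 / (a + b) := by
  have hx : 1 ≤ a / b := (one_le_div hb).2 hab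
  have h := log_ge (a / b) hx
  have heq : 2 * (a / b - 1) / (a / b + 1) = 2 * (a - b) / (a + b) := by
    rw [div_eq_div_iff (by positivity) (by positivity)]
    field_simp
  rw [heq] at h
  have hab0 : 0 ≤ a - b := by linarith
  have := mul_le_mul_of_nonneg_left h hab0
  calc 2 * (a - b) ^ 2 / (a + b) = (a - b) * (2 * (a - b) / (a + b)) := by ring
    _ ≤ (a - b) * Real.log (a / b) := this

/-- Componentwise logarithmic inequality: for `a, b > 0`,
`(a − b) log(a/b) ≥ 2 (a − b)² / (a + b)`. -/
theorem log_ineq (a b : ℝ) (ha : 0 < a) (hb : 0 < b) :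
    (a - b) * Real.log (a / b) ≥ 2 * (a - b) ^ 2 / (a + b) := by
  rcases le_total b a with hab | hab
  · exact log_ineq_half a b ha hb hab
  · have h := log_ineq_half b a hb ha hab
    have hlog : Real.log (a / b) = -Real.log (b / a) := by
      rw [Real.log_div ha.ne' hb.ne', Real.log_div hb.ne' ha.ne']; ring
    rw [hlog]
    calc 2 * (a - b) ^ 2 / (a + b) = 2 * (b - a) ^ 2 / (b + a) := by ring_nf
      _ ≤ (b - a) * Real.log (b / a) := h
      _ = (a - b) * -Real.log (b / a) := by ring
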